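/- Let G be a finite group and i a positive integer dividing |G|. Then i divides the sum over all divisors j of i of the number of elements of G of order j. -/

import Mathlib

open Finset

open scoped Classical

namespace FrobeniusAux

variable {G : Type*} [Group G] [Fintype G]

lemma pow_k_inj (k : ℕ) (hk : (Fintype.card G).Coprime k) :
    Function.Injective fun x : G => x ^ k := by
  have h : (Nat.card G).Coprime k := by rwa [Nat.card_eq_fintype_card]
  exact fun x y hxy => (powCoprime h).injective hxy

/-- The heart: the number of elements whose order is divisible by `p^(a+1)`
is divisible by `p^a` (in fact by `φ(p^(a+1))`). -/
lemma heart (p : ℕ) (hp : p.Prime) (a : ℕ) :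
    p ^ a ∣ #(univ.filter fun t : G => p ^ (a+1) ∣ orderOf t) := by
  set q := p ^ (a+1) with hq
  have hq0 : q ≠ 0 := pow_ne_zero _ hp.ne_zero
  by_cases hqcard : q ∣ Fintype.card G
  · -- main case
    have hN0 : Fintype.card G ≠ 0 := Fintype.card_ne_zero
    set v := (Fintype.card G).factorization p with hv
    set m' := ordCompl[p] (Fintype.card G) with hm'
    have hav : a + 1 ≤ v := (Nat.Prime.pow_dvd_iff_le_factorization hp hN0).mp hqcard
    have hqpv : q ∣ p ^ v := pow_dvd_pow p hav
    set σ : G → G := fun t => t ^ (orderOf t / q) with hσ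
    have hσord : ∀ t : G, q ∣ orderOf t → orderOf (σ t) = q := by
      intro t ht
      have ht0 : orderOf t ≠ 0 := (orderOf_pos t).ne'
      have hgcd : Nat.gcd (orderOf t) (orderOf t / q) = orderOf t / q :=
        Nat.gcd_eq_right (Nat.div_dvd_of_dvd ht)
      rw [hσ, orderOf_pow, hgcd, Nat.div_div_self ht ht0]
    set W : Finset G := univ.filter fun t : G => q ∣ orderOf t with hW
    set Q : Finset G := univ.filter fun w : G => orderOf w = q with hQ
    set Fib : G → ℕ := fun w => #(W.filter fun t => σ t = w) with hFib
    have hcard : #W = ∑ w ∈ Q, Fib w := by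
      refine card_eq_sum_card_fiberwise fun t ht => ?_
      simp only [hQ, mem_coe, mem_filter, mem_univ, true_and]
      exact hσord t (by simpa [hW] using ht)
    -- fiber inequality
    have fib_le : ∀ w ∈ Q, ∀ j : ℕ, Nat.gcd q j = 1 → Fib w ≤ Fib (w ^ j) := by
      intro w hwQ j hj
      have hwq : orderOf w = q := by simpa [hQ] using hwQ
      -- construct k
      have copm : (p ^ v).Coprime m' := (Nat.coprime_ordCompl hp hN0).pow_left v
      obtain ⟨k, hk1, hk2⟩ := Nat.chineseRemainder copm j 1
      have hkq : k ≡ j [MOD q] := Nat.ModEq.of_dvd hqpv hk1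
      have hpk : ¬ p ∣ k := by
        intro hpk
        have hpv : p ∣ p ^ v := dvd_pow_self p (by omega : v ≠ 0)
        have hk1' : k ≡ j [MOD p] := Nat.ModEq.of_dvd hpv hk1
        have hpj : p ∣ j := (Nat.modEq_zero_iff_dvd).mp
          (hk1'.symm.trans (Nat.modEq_zero_iff_dvd.mpr hpk))
        have : p ∣ Nat.gcd q j := Nat.dvd_gcd (dvd_pow_self p (Nat.succ_ne_zero a)) hpj
        rw [hj] at this
        exact hp.ne_one (Nat.dvd_one.mp this)
      have hcop : (Fintype.card G).Coprime k := by
        have h1 : (p ^ v).Coprime k := (hp.coprime_iff_not_dvd.mpr hpk).pow_left v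
        have h2 : m'.Coprime k := by
          have hm'pos : 0 < m' := Nat.ordCompl_pos p hN0
          rcases Nat.lt_or_ge m' 2 with h' | h'
          · have : m' = 1 := by omega
            rw [this]; exact Nat.coprime_one_left k
          · have hk1le : 1 ≤ k := by
              by_contra hk0
              push_neg at hk0
              interval_cases k
              have : (0 : ℕ) % m' = 1 % m' := hk2
              rw [Nat.zero_mod, Nat.mod_eq_of_lt h'] at this
              omega
            have hdvd : m' ∣ k - 1 := (Nat.modEq_iff_dvd' hk1le).mp hk2.symm
            have : Nat.gcd m' k ∣ 1 := by
              have d1 : Nat.gcd m' k ∣ k := Nat.gcd_dvd_right _ _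
              have d2 : Nat.gcd m' k ∣ k - 1 := dvd_trans (Nat.gcd_dvd_left _ _) hdvd
              have := Nat.dvd_sub d1 d2
              simpa [Nat.sub_sub_self hk1le] using this
            exact Nat.dvd_one.mp this
        calc Nat.gcd (Fintype.card G) k
            = Nat.gcd (p ^ v * m') k := by rw [Nat.ordProj_mul_ordCompl_eq_self]
          _ = 1 := Nat.Coprime.mul h1 h2
      -- the power map
      have hinj : Function.Injective fun x : G => x ^ k := pow_k_inj k hcop
      refine card_le_card_of_injOn (fun t => t ^ k) ?_ (hinj.injOn)
      intro t ht
      simp only [hFib, hW, mem_coe, mem_filter, mem_univ, true_and] at ht ⊢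
      obtain ⟨htq, htσ⟩ := ht
      have hordk : orderOf (t ^ k) = orderOf t := by
        rw [orderOf_pow]
        have : (orderOf t).Coprime k := Nat.Coprime.coprime_dvd_left orderOf_dvd_card hcop
        rw [Nat.Coprime] at this
        rw [this, Nat.div_one]
      refine ⟨by rw [hordk]; exact htq, ?_⟩
      have : σ (t ^ k) = (σ t) ^ k := by
        rw [hσ]
        simp only [hordk]
        rw [← pow_mul, ← pow_mul, mul_comm]
      rw [this, htσ]
      exact pow_eq_pow_iff_modEq.mpr (by rwa [hwq])
    -- fibers are constant on generator classes
    have gcd_one_of_pow : ∀ w w' : G, orderOf w = q → orderOf w' = q → ∀ j : ℕ, w ^ j = w' →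
        Nat.gcd q j = 1 := by
      intro w w' hw hw' j hj
      have : orderOf (w ^ j) = q / Nat.gcd q j := by rw [orderOf_pow, hw]
      rw [hj, hw'] at this
      have := Nat.div_eq_self.mp this.symm
      omega
    have fib_eq : ∀ w ∈ Q, ∀ w' ∈ Q, Subgroup.zpowers w = Subgroup.zpowers w' → Fib w = Fib w' := by
      intro w hw w' hw' hzp
      have hwq : orderOf w = q := by simpa [hQ] using hw
      have hw'q : orderOf w' = q := by simpa [hQ] using hw'
      have h1 : w' ∈ Subgroup.zpowers w := hzp ▸ Subgroup.mem_zpowers w'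
      have h2 : w ∈ Subgroup.zpowers w' := hzp.symm ▸ Subgroup.mem_zpowers w
      obtain ⟨j, hj0⟩ := (mem_powers_iff_mem_zpowers).mpr h1
      obtain ⟨j', hj'0⟩ := (mem_powers_iff_mem_zpowers).mpr h2
      have hj : w ^ j = w' := hj0
      have hj' : w' ^ j' = w := hj'0
      have hgj : Nat.gcd q j = 1 := gcd_one_of_pow w w' hwq hw'q j hj
      have hgj' : Nat.gcd q j' = 1 := gcd_one_of_pow w' w hw'q hwq j' hj'
      have le1 : Fib w ≤ Fib (w ^ j) := fib_le w hw j hgj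
      have le2 : Fib w' ≤ Fib (w' ^ j') := fib_le w' hw' j' hgj'
      rw [hj] at le1; rw [hj'] at le2
      omega
    -- partition Q by the cyclic subgroup generated
    have hsum2 : ∑ w ∈ Q, Fib w =
        ∑ C ∈ Q.image (fun w => Subgroup.zpowers w),
          ∑ w ∈ Q.filter (fun w => Subgroup.zpowers w = C), Fib w :=
      (sum_fiberwise_of_maps_to (fun w hw => mem_image_of_mem _ hw) _).symm
    rw [hcard, hsum2]
    refine dvd_sum fun C hC => ?_
    obtain ⟨w₀, hw₀Q, hw₀C⟩ := mem_image.mp hC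
    have hw₀q : orderOf w₀ = q := by simpa [hQ] using hw₀Q
    -- the inner sum is (number of generators of C) * Fib w₀
    have hconst : ∀ w ∈ Q.filter (fun w => Subgroup.zpowers w = C), Fib w = Fib w₀ := by
      intro w hw
      obtain ⟨hwQ, hwC⟩ := mem_filter.mp hw
      exact fib_eq w hwQ w₀ hw₀Q (by rw [hwC, ← hw₀C])
    rw [Finset.sum_congr rfl hconst, Finset.sum_const, smul_eq_mul]
    -- count generators: equals totient q
    have hgen : #(Q.filter fun w => Subgroup.zpowers w = C) = Nat.totient q := by
      haveI : Fintype (Subgroup.zpowers w₀) := inferInstance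
      have hcyc : IsCyclic (Subgroup.zpowers w₀) := by
        refine ⟨⟨⟨w₀, Subgroup.mem_zpowers w₀⟩, fun x => ?_⟩⟩
        obtain ⟨k, hk⟩ := Subgroup.mem_zpowers_iff.mp x.2
        exact ⟨k, Subtype.ext (by push_cast; exact hk)⟩
      have hcardC : Fintype.card (Subgroup.zpowers w₀) = q := by
        rw [← Nat.card_eq_fintype_card, Nat.card_zpowers, hw₀q]
      have htot : #(univ.filter fun x : Subgroup.zpowers w₀ => orderOf x = q) = Nat.totient q :=
        IsCyclic.card_orderOf_eq_totient (by rw [hcardC])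
      rw [← htot]
      refine card_nbij' (fun w => if h : w ∈ Subgroup.zpowers w₀ then ⟨w, h⟩ else 1)
        (fun x => (x : G)) ?_ ?_ ?_ ?_
      · intro w hw
        obtain ⟨hwQ, hwC⟩ := mem_filter.mp hw
        have hwmem : w ∈ Subgroup.zpowers w₀ := by
          rw [hw₀C, ← hwC]; exact Subgroup.mem_zpowers w
        simp only [mem_coe, mem_filter, mem_univ, true_and, dif_pos hwmem]
        rw [← Subgroup.orderOf_coe]
        simpa [hQ] using hwQ
      · intro x hx
        have hxq : orderOf x = q := by simpa using (mem_filter.mp hx).2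
        have hordx : orderOf (x : G) = q := by rw [Subgroup.orderOf_coe, hxq]
        refine mem_filter.mpr ⟨by simp [hQ, hordx], ?_⟩
        -- zpowers ↑x = C
        have hle : Subgroup.zpowers (x : G) ≤ Subgroup.zpowers w₀ :=
          Subgroup.zpowers_le.mpr x.2
        have hcards : ((Subgroup.zpowers w₀ : Subgroup G) : Set G).ncard ≤
            ((Subgroup.zpowers (x : G) : Subgroup G) : Set G).ncard := by
          rw [← Nat.card_coe_set_eq, ← Nat.card_coe_set_eq]
          have e1 : Nat.card ((Subgroup.zpowers (x : G) : Subgroup G) : Set G) = q :=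
            (Nat.card_zpowers (x : G)).trans hordx
          have e2 : Nat.card ((Subgroup.zpowers w₀ : Subgroup G) : Set G) = q :=
            (Nat.card_zpowers w₀).trans hw₀q
          rw [e1, e2]
        have hseteq : ((Subgroup.zpowers (x : G) : Subgroup G) : Set G) =
            ((Subgroup.zpowers w₀ : Subgroup G) : Set G) :=
          Set.eq_of_subset_of_ncard_le hle hcards (Set.toFinite _)
        rw [← hw₀C]
        exact SetLike.coe_injective hseteq
      · intro w hw
        obtain ⟨hwQ, hwC⟩ := mem_filter.mp hw
        have hwmem : w ∈ Subgroup.zpowers w₀ := by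
          rw [hw₀C, ← hwC]; exact Subgroup.mem_zpowers w
        simp [dif_pos hwmem]
      · intro x hx
        have : (x : G) ∈ Subgroup.zpowers w₀ := x.2
        simp [dif_pos this]
    rw [hgen]
    have : Nat.totient q = p ^ a * (p - 1) := by
      rw [hq, Nat.totient_prime_pow hp (Nat.succ_pos a)]
      simp
    rw [this]
    exact Dvd.dvd.mul_right (Dvd.dvd.mul_right dvd_rfl _) _
  · have : (univ.filter fun t : G => q ∣ orderOf t) = ∅ := by
      refine filter_eq_empty_iff.mpr fun t _ hdvd => hqcard (hdvd.trans orderOf_dvd_card)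
    simp [this]

/-- The count of solutions of `x^(p^a * m') = 1` for `m'` the full `p`-complement
of `|G|` is divisible by `p^a`, provided `p^a ∣ |G|`. -/
lemma count_top (p : ℕ) (hp : p.Prime) (a : ℕ) (ha : p ^ a ∣ Fintype.card G) :
    p ^ a ∣ #(univ.filter fun t : G => t ^ (p ^ a * ordCompl[p] (Fintype.card G)) = 1) := by
  have hN0 : Fintype.card G ≠ 0 := Fintype.card_ne_zero
  set m' := ordCompl[p] (Fintype.card G) with hm'
  have hiff : ∀ t : G, (t ^ (p ^ a * m') = 1) ↔ ¬ (p ^ (a+1) ∣ orderOf t) := by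
    intro t
    rw [← orderOf_dvd_iff_pow_eq_one]
    constructor
    · intro h hq
      have h2 : p ^ (a+1) ∣ p ^ a * m' := hq.trans h
      rw [pow_succ] at h2
      have : p ∣ m' := (mul_dvd_mul_iff_left (pow_ne_zero a hp.ne_zero)).mp h2
      exact Nat.not_dvd_ordCompl hp hN0 this
    · intro h
      set b := (orderOf t).factorization p with hb
      have hble : b ≤ a := by
        by_contra hba
        push_neg at hba
        exact h ((pow_dvd_pow p hba).trans (Nat.ordProj_dvd (orderOf t) p))
      have hdecomp : p ^ b * ordCompl[p] (orderOf t) = orderOf t :=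
        Nat.ordProj_mul_ordCompl_eq_self (orderOf t) p
      rw [← hdecomp]
      exact mul_dvd_mul (pow_dvd_pow p hble)
        (Nat.ordCompl_dvd_ordCompl_of_dvd orderOf_dvd_card p)
  have hfe : (univ.filter fun t : G => t ^ (p ^ a * m') = 1)
      = univ.filter fun t : G => ¬ (p ^ (a+1) ∣ orderOf t) := by
    apply filter_congr
    intro t _
    simp [hiff t]
  rw [hfe]
  have hadd := card_filter_add_card_filter_not (s := (univ : Finset G))
    (fun t : G => p ^ (a+1) ∣ orderOf t)
  have hW := heart (G := G) p hp a
  have : #(univ.filter fun t : G => ¬ (p ^ (a+1) ∣ orderOf t))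
      = Fintype.card G - #(univ.filter fun t : G => p ^ (a+1) ∣ orderOf t) := by
    rw [← Finset.card_univ]
    omega
  rw [this]
  exact Nat.dvd_sub ha hW

lemma arith_step (p : ℕ) (a orb cH A' N : ℕ) (hN : N ≠ 0)
    (hprod : orb * cH = N) (hA' : p ^ min a (cH.factorization p) ∣ A') :
    p ^ min a (N.factorization p) ∣ orb * A' := by
  have hcH0 : cH ≠ 0 := by rintro rfl; rw [mul_zero] at hprod; exact hN hprod.symm
  have hdvd : cH ∣ N := ⟨orb, by rw [← hprod, mul_comm]⟩
  have horbeq : orb = N / cH := by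
    rw [← hprod, Nat.mul_div_cancel _ (Nat.pos_of_ne_zero hcH0)]
  have hfac : orb.factorization p = N.factorization p - cH.factorization p := by
    rw [horbeq, Nat.factorization_div hdvd]
    simp
  have h1 : p ^ (N.factorization p - cH.factorization p) ∣ orb := by
    rw [← hfac]; exact Nat.ordProj_dvd orb p
  have hle : cH.factorization p ≤ N.factorization p :=
    ((Nat.factorization_le_iff_dvd hcH0 hN).mpr hdvd) p
  calc p ^ min a (N.factorization p)
      ∣ p ^ ((N.factorization p - cH.factorization p) + min a (cH.factorization p)) :=
        pow_dvd_pow p (by omega)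
    _ ∣ orb * A' := by rw [pow_add]; exact mul_dvd_mul h1 hA'

lemma split_sum (p a m : ℕ) (hp : p.Prime) (hm : ¬ p ∣ m)
    (IH : ∀ y : G, y ∉ Subgroup.center G →
      p ^ min a ((Fintype.card (Subgroup.centralizer ({y} : Set G))).factorization p) ∣
        #(univ.filter fun u : Subgroup.centralizer ({y} : Set G) => u ^ p ^ a = 1)) :
    ∃ z K : ℕ, ¬ p ∣ z ∧
      p ^ min a ((Fintype.card G).factorization p) ∣ K ∧
      #(univ.filter fun t : G => t ^ (p ^ a * m) = 1)
        = z * #(univ.filter fun u : G => u ^ p ^ a = 1) + K := by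
  have hm0 : m ≠ 0 := by rintro rfl; exact hm (dvd_zero p)
  set n := p ^ a * m with hn
  have cop : (p ^ a).Coprime m := Nat.Coprime.pow_left a (hp.coprime_iff_not_dvd.mpr hm)
  obtain ⟨s, hs1, hs2⟩ := Nat.chineseRemainder cop 0 1
  obtain ⟨s', hs'1, hs'2⟩ := Nat.chineseRemainder cop 1 0
  have hsum : s + s' ≡ 1 [MOD n] := by
    rw [hn]
    refine (Nat.modEq_and_modEq_iff_modEq_mul cop).mp ⟨?_, ?_⟩
    · simpa using hs1.add hs'1
    · simpa using hs2.add hs'2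
  have hpas : p ^ a ∣ s := Nat.modEq_zero_iff_dvd.mp hs1
  have hms' : m ∣ s' := Nat.modEq_zero_iff_dvd.mp hs'2
  set Y : Finset G := univ.filter fun y : G => y ^ m = 1 with hY
  set c : G → ℕ := fun y =>
    #(univ.filter fun u : G => u ∈ Subgroup.centralizer ({y} : Set G) ∧ u ^ p ^ a = 1) with hc
  -- Step 1: fiberwise decomposition over Y
  have step1 : #(univ.filter fun t : G => t ^ n = 1) = ∑ y ∈ Y, c y := by
    have hfib : #(univ.filter fun t : G => t ^ n = 1)
        = ∑ y ∈ Y, #((univ.filter fun t : G => t ^ n = 1).filter fun t => t ^ s = y) := by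
      refine card_eq_sum_card_fiberwise fun t ht => ?_
      have htn : t ^ n = 1 := by simpa using ht
      have hot : orderOf t ∣ n := orderOf_dvd_of_pow_eq_one htn
      have : orderOf t ∣ s * m := hot.trans (by rw [hn]; exact mul_dvd_mul_right hpas m)
      simp only [hY, mem_coe, mem_filter, mem_univ, true_and]
      rw [← pow_mul]
      exact orderOf_dvd_iff_pow_eq_one.mp this
    rw [hfib]
    refine Finset.sum_congr rfl fun y hy => ?_
    have hym : y ^ m = 1 := by simpa [hY] using hy
    have hoy : orderOf y ∣ m := orderOf_dvd_of_pow_eq_one hym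
    -- bijection between the fiber and the centralizer count
    refine card_nbij' (fun t => t ^ s') (fun u => u * y) ?_ ?_ ?_ ?_
    · -- forward maps to
      intro t ht
      simp only [mem_coe, mem_filter, mem_univ, true_and] at ht
      obtain ⟨htn, hts⟩ := ht
      have hot : orderOf t ∣ n := orderOf_dvd_of_pow_eq_one htn
      simp only [mem_coe, mem_filter, mem_univ, true_and]
      constructor
      · rw [Subgroup.mem_centralizer_iff]
        rintro h hmem
        rw [Set.mem_singleton_iff] at hmem
        subst hmem
        rw [← hts, ← pow_add, ← pow_add, Nat.add_comm]
      · rw [← pow_mul]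
        have hnd : n ∣ s' * p ^ a := by
          rw [hn, mul_comm s' (p ^ a)]
          exact Nat.mul_dvd_mul_left _ hms'
        exact orderOf_dvd_iff_pow_eq_one.mp (hot.trans hnd)
    · -- backward maps to
      intro u hu
      simp only [mem_coe, mem_filter, mem_univ, true_and] at hu
      obtain ⟨huc, hua⟩ := hu
      have hcomm : Commute u y := by
        have := Subgroup.mem_centralizer_iff.mp huc y (Set.mem_singleton y)
        exact this.symm
      have hou : orderOf u ∣ p ^ a := orderOf_dvd_of_pow_eq_one hua
      simp only [mem_coe, mem_filter, mem_univ, true_and]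
      constructor
      · rw [hcomm.mul_pow]
        have h1 : u ^ n = 1 := by
          rw [hn, pow_mul]
          rw [hua, one_pow]
        have h2 : y ^ n = 1 := by
          rw [hn, mul_comm, pow_mul, hym, one_pow]
        rw [h1, h2, one_mul]
      · rw [hcomm.mul_pow]
        have h1 : u ^ s = 1 := orderOf_dvd_iff_pow_eq_one.mp (hou.trans hpas)
        have h2 : y ^ s = y := by
          nth_rewrite 2 [← pow_one y]
          exact pow_eq_pow_iff_modEq.mpr (Nat.ModEq.of_dvd hoy hs2)
        rw [h1, h2, one_mul]
    · -- left inverse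
      intro t ht
      simp only [mem_coe, mem_filter, mem_univ, true_and] at ht
      obtain ⟨htn, hts⟩ := ht
      have hot : orderOf t ∣ n := orderOf_dvd_of_pow_eq_one htn
      show t ^ s' * y = t
      rw [← hts, ← pow_add]
      nth_rewrite 2 [← pow_one t]
      exact pow_eq_pow_iff_modEq.mpr (Nat.ModEq.of_dvd hot ((Nat.add_comm s s') ▸ hsum))
    · -- right inverse
      intro u hu
      simp only [mem_coe, mem_filter, mem_univ, true_and] at hu
      obtain ⟨huc, hua⟩ := hu
      have hcomm : Commute u y :=
        (Subgroup.mem_centralizer_iff.mp huc y (Set.mem_singleton y)).symm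
      have hou : orderOf u ∣ p ^ a := orderOf_dvd_of_pow_eq_one hua
      show (u * y) ^ s' = u
      rw [hcomm.mul_pow]
      have h1 : u ^ s' = u := by
        nth_rewrite 2 [← pow_one u]
        exact pow_eq_pow_iff_modEq.mpr (Nat.ModEq.of_dvd hou hs'1)
      have h2 : y ^ s' = 1 := orderOf_dvd_iff_pow_eq_one.mp (hoy.trans hms')
      rw [h1, h2, mul_one]
  -- Step 2: split Y into central and noncentral parts
  set A := #(univ.filter fun u : G => u ^ p ^ a = 1) with hA
  have hsplit : ∑ y ∈ Y, c y
      = ∑ y ∈ Y.filter (fun y => y ∈ Subgroup.center G), c y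
        + ∑ y ∈ Y.filter (fun y => y ∉ Subgroup.center G), c y :=
    (sum_filter_add_sum_filter_not Y _ c).symm
  have hcentral : ∀ y ∈ Y.filter (fun y => y ∈ Subgroup.center G), c y = A := by
    intro y hy
    have hyc : y ∈ Subgroup.center G := (mem_filter.mp hy).2
    simp only [hc, hA]
    congr 1
    apply filter_congr
    intro u _
    simp only [and_iff_right_iff_imp]
    intro _
    rw [Subgroup.mem_centralizer_iff]
    rintro w hw
    rw [Set.mem_singleton_iff] at hw; subst hw
    exact (Subgroup.mem_center_iff.mp hyc u).symm
  have hzeta : ∑ y ∈ Y.filter (fun y => y ∈ Subgroup.center G), c y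
      = #(Y.filter (fun y => y ∈ Subgroup.center G)) * A := by
    rw [Finset.sum_congr rfl hcentral, Finset.sum_const, smul_eq_mul]
  set zeta := #(Y.filter (fun y => y ∈ Subgroup.center G)) with hzeta'
  -- zeta is coprime to p, via Cauchy's theorem
  have hpz : ¬ p ∣ zeta := by
    intro hpz
    set K : Subgroup G :=
      { carrier := {y : G | y ∈ Subgroup.center G ∧ y ^ m = 1}
        one_mem' := ⟨Subgroup.one_mem _, one_pow m⟩
        mul_mem' := by
          rintro x y ⟨hxc, hxm⟩ ⟨hyc, hym⟩
          refine ⟨Subgroup.mul_mem _ hxc hyc, ?_⟩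
          have hcomm : Commute x y := (Subgroup.mem_center_iff.mp hxc y).symm
          rw [hcomm.mul_pow, hxm, hym, one_mul]
        inv_mem' := by
          rintro x ⟨hxc, hxm⟩
          exact ⟨Subgroup.inv_mem _ hxc, by rw [inv_pow, hxm, inv_one]⟩ } with hK
    have hmemK : ∀ y : G, y ∈ K ↔ (y ∈ Subgroup.center G ∧ y ^ m = 1) := fun y => Iff.rfl
    have hKcard : Fintype.card K = zeta := by
      rw [Fintype.card_subtype, hzeta']
      congr 1
      ext y
      simp only [mem_filter, mem_univ, true_and, hY, hmemK]
      tauto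
    haveI : Fact p.Prime := ⟨hp⟩
    obtain ⟨x, hx⟩ := exists_prime_orderOf_dvd_card (G := K) p (by rw [hKcard]; exact hpz)
    have hxm : x ^ m = 1 := by
      have hcoe : ((x : G)) ^ m = 1 := x.2.2
      refine OneMemClass.coe_eq_one.mp ?_
      push_cast
      exact hcoe
    have : orderOf x ∣ m := orderOf_dvd_of_pow_eq_one hxm
    rw [hx] at this
    exact hm this
  -- noncentral part
  set Ync := Y.filter (fun y => y ∉ Subgroup.center G) with hYnc
  have horb : ∑ y ∈ Ync, c y
      = ∑ S ∈ Ync.image (fun y => MulAction.orbit (ConjAct G) y),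
          ∑ y ∈ Ync.filter (fun y => MulAction.orbit (ConjAct G) y = S), c y :=
    (sum_fiberwise_of_maps_to (fun y hy => mem_image_of_mem _ hy) _).symm
  have hKdvd : p ^ min a ((Fintype.card G).factorization p) ∣ ∑ y ∈ Ync, c y := by
    rw [horb]
    refine dvd_sum fun S hS => ?_
    obtain ⟨y₀, hy₀, hy₀S⟩ := mem_image.mp hS
    obtain ⟨hy₀Y, hy₀nc⟩ := mem_filter.mp hy₀
    have hy₀m : y₀ ^ m = 1 := by simpa [hY] using hy₀Y
    -- the fiber is exactly the orbit of y₀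
    have hfibeq : Ync.filter (fun y => MulAction.orbit (ConjAct G) y = S)
        = (MulAction.orbit (ConjAct G) y₀).toFinset := by
      ext x
      simp only [mem_filter, Set.mem_toFinset]
      constructor
      · rintro ⟨_, hxS⟩
        exact MulAction.orbit_eq_iff.mp (hxS.trans hy₀S.symm)
      · intro hx
        obtain ⟨g, hg⟩ := MulAction.mem_orbit_iff.mp hx
        set h := ConjAct.ofConjAct g with hh
        have hg' : h * y₀ * h⁻¹ = x := by rw [← ConjAct.smul_def]; exact hg
        have hxm : x ^ m = 1 := by rw [← hg', conj_pow, hy₀m, mul_one, mul_inv_cancel]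
        have hxnc : x ∉ Subgroup.center G := by
          intro hxc
          apply hy₀nc
          have hy₀x : y₀ = x := by
            have h1 : y₀ = h⁻¹ * x * h := by rw [← hg']; group
            have h2 : h⁻¹ * x = x * h⁻¹ := Subgroup.mem_center_iff.mp hxc h⁻¹
            rw [h1, h2, mul_assoc, inv_mul_cancel, mul_one]
          rw [hy₀x]; exact hxc
        refine ⟨mem_filter.mpr ⟨mem_filter.mpr ⟨mem_univ _, hxm⟩, hxnc⟩, ?_⟩
        exact (MulAction.orbit_eq_iff.mpr hx).trans hy₀S
    -- c is constant on the orbit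
    have hconst : ∀ x ∈ (MulAction.orbit (ConjAct G) y₀).toFinset, c x = c y₀ := by
      intro x hx
      obtain ⟨g, hg⟩ := MulAction.mem_orbit_iff.mp (Set.mem_toFinset.mp hx)
      set h := ConjAct.ofConjAct g with hh
      have hg' : h * y₀ * h⁻¹ = x := by rw [← ConjAct.smul_def]; exact hg
      have hy₀eq : y₀ = h⁻¹ * x * h := by rw [← hg']; group
      simp only [hc]
      refine card_nbij' (fun u => h⁻¹ * u * h) (fun u => h * u * h⁻¹) ?_ ?_ ?_ ?_
      · intro u hu
        simp only [mem_coe, mem_filter, mem_univ, true_and] at hu ⊢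
        obtain ⟨huc, hua⟩ := hu
        have hux : x * u = u * x :=
          Subgroup.mem_centralizer_iff.mp huc x (Set.mem_singleton x)
        constructor
        · rw [Subgroup.mem_centralizer_iff]
          rintro w hw
          rw [Set.mem_singleton_iff] at hw; subst hw
          rw [hy₀eq]
          calc h⁻¹ * x * h * (h⁻¹ * u * h) = h⁻¹ * (x * u) * h := by group
            _ = h⁻¹ * (u * x) * h := by rw [hux]
            _ = h⁻¹ * u * h * (h⁻¹ * x * h) := by group
        · have : h⁻¹ * u * h = h⁻¹ * u * (h⁻¹)⁻¹ := by rw [inv_inv]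
          rw [this, conj_pow, hua, mul_one, mul_inv_cancel]
      · intro u hu
        simp only [mem_coe, mem_filter, mem_univ, true_and] at hu ⊢
        obtain ⟨huc, hua⟩ := hu
        have huy : y₀ * u = u * y₀ :=
          Subgroup.mem_centralizer_iff.mp huc y₀ (Set.mem_singleton y₀)
        constructor
        · rw [Subgroup.mem_centralizer_iff]
          rintro w hw
          rw [Set.mem_singleton_iff] at hw; subst hw
          rw [← hg']
          calc h * y₀ * h⁻¹ * (h * u * h⁻¹) = h * (y₀ * u) * h⁻¹ := by group
            _ = h * (u * y₀) * h⁻¹ := by rw [huy]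
            _ = h * u * h⁻¹ * (h * y₀ * h⁻¹) := by group
        · rw [conj_pow, hua, mul_one, mul_inv_cancel]
      · intro u _
        group
      · intro u _
        group
    rw [hfibeq, Finset.sum_congr rfl hconst, Finset.sum_const, smul_eq_mul]
    -- orbit-stabilizer
    have horbstab := MulAction.card_orbit_mul_card_stabilizer_eq_card_group (ConjAct G) y₀
    rw [ConjAct.card] at horbstab
    have hstab_iff : ∀ g : ConjAct G, g ∈ MulAction.stabilizer (ConjAct G) y₀ ↔
        ConjAct.ofConjAct g ∈ Subgroup.centralizer ({y₀} : Set G) := by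
      intro g
      rw [MulAction.mem_stabilizer_iff, ConjAct.smul_def, Subgroup.mem_centralizer_iff]
      constructor
      · intro hg w hw
        rw [Set.mem_singleton_iff] at hw
        rw [hw]
        calc y₀ * ConjAct.ofConjAct g
            = (ConjAct.ofConjAct g * y₀ * (ConjAct.ofConjAct g)⁻¹) * ConjAct.ofConjAct g := by
              rw [hg]
          _ = ConjAct.ofConjAct g * y₀ := by group
      · intro hg
        have hcom := hg y₀ (Set.mem_singleton y₀)
        rw [← hcom]
        group
    have hstabcent : Fintype.card (MulAction.stabilizer (ConjAct G) y₀)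
        = Fintype.card (Subgroup.centralizer ({y₀} : Set G)) :=
      Fintype.card_congr (Equiv.subtypeEquiv ConjAct.ofConjAct.toEquiv (fun g => hstab_iff g))
    have htf : #(MulAction.orbit (ConjAct G) y₀).toFinset
        = Fintype.card (MulAction.orbit (ConjAct G) y₀) := Set.toFinset_card _
    -- convert c y₀ to the subgroup count
    have hcsub : c y₀
        = #(univ.filter fun u : Subgroup.centralizer ({y₀} : Set G) => u ^ p ^ a = 1) := by
      simp only [hc]
      refine card_nbij'
        (fun u => if h : u ∈ Subgroup.centralizer ({y₀} : Set G)
          then (⟨u, h⟩ : Subgroup.centralizer ({y₀} : Set G)) else 1)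
        (fun u => (u : G)) ?_ ?_ ?_ ?_
      · intro u hu
        simp only [mem_coe, mem_filter, mem_univ, true_and] at hu
        obtain ⟨huc, hua⟩ := hu
        simp only [mem_coe, mem_filter, mem_univ, true_and, dif_pos huc]
        refine Subtype.ext ?_
        push_cast
        exact hua
      · intro u hu
        simp only [mem_coe, mem_filter, mem_univ, true_and] at hu ⊢
        refine ⟨u.2, ?_⟩
        have : ((u ^ p ^ a : Subgroup.centralizer ({y₀} : Set G)) : G) = ((1 : Subgroup.centralizer ({y₀} : Set G)) : G) := by
          rw [hu]
        push_cast at this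
        exact this
      · intro u hu
        simp only [mem_coe, mem_filter, mem_univ, true_and] at hu
        simp [dif_pos hu.1]
      · intro u _
        have : (u : G) ∈ Subgroup.centralizer ({y₀} : Set G) := u.2
        simp [dif_pos this]
    rw [hcsub, htf]
    exact arith_step p a _ _ _ _ Fintype.card_ne_zero
      (by rw [← hstabcent]; exact horbstab) (IH y₀ hy₀nc)
  refine ⟨zeta, ∑ y ∈ Ync, c y, hpz, hKdvd, ?_⟩
  rw [step1, hsplit, hzeta]

lemma count_eq_min (p : ℕ) (hp : p.Prime) (a m : ℕ) (hm : ¬ p ∣ m) :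
    #(univ.filter fun t : G => t ^ (p ^ a * m) = 1)
      = #(univ.filter fun t : G => t ^ (p ^ min a ((Fintype.card G).factorization p) * m) = 1) := by
  set e := min a ((Fintype.card G).factorization p) with he
  refine congrArg Finset.card (filter_congr ?_)
  intro t _
  have ht0 : orderOf t ≠ 0 := (orderOf_pos t).ne'
  have hcard0 : Fintype.card G ≠ 0 := Fintype.card_ne_zero
  rw [← orderOf_dvd_iff_pow_eq_one, ← orderOf_dvd_iff_pow_eq_one]
  constructor
  · intro h
    set b := (orderOf t).factorization p with hb
    have hble : b ≤ a := by
      have h1 : p ^ b ∣ p ^ a * m := (Nat.ordProj_dvd (orderOf t) p).trans h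
      have h2 : p ^ b ∣ p ^ a :=
        (Nat.Coprime.dvd_of_dvd_mul_right
          ((hp.coprime_iff_not_dvd.mpr hm).pow_left b) h1)
      exact (Nat.pow_dvd_pow_iff_le_right hp.one_lt).mp h2
    have hbv : b ≤ (Fintype.card G).factorization p := by
      have := ((Nat.factorization_le_iff_dvd ht0 hcard0).mpr orderOf_dvd_card) p
      simpa [hb] using this
    have hrm : ordCompl[p] (orderOf t) ∣ m := by
      have h1 : ordCompl[p] (orderOf t) ∣ m * p ^ a := by
        refine dvd_trans (Nat.ordCompl_dvd (orderOf t) p) ?_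
        rwa [mul_comm]
      exact Nat.Coprime.dvd_of_dvd_mul_right
        (((Nat.coprime_ordCompl hp ht0).symm).pow_right a) h1
    calc orderOf t = p ^ b * ordCompl[p] (orderOf t) :=
          (Nat.ordProj_mul_ordCompl_eq_self (orderOf t) p).symm
      _ ∣ p ^ e * m := mul_dvd_mul (pow_dvd_pow p (by omega)) hrm
  · intro h
    refine h.trans (mul_dvd_mul_right (pow_dvd_pow p ?_) m)
    omega

universe u

theorem key : ∀ (N : ℕ) (G : Type u) [Group G] [Fintype G], Fintype.card G = N →
    ∀ p a m : ℕ, p.Prime → ¬ p ∣ m →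
    p ^ min a ((Fintype.card G).factorization p) ∣
      #(univ.filter fun t : G => t ^ (p ^ a * m) = 1) := by
  intro N
  induction N using Nat.strong_induction_on with
  | _ N IH =>
    intro G _ _ hN p a m hp hm
    have hcard0 : Fintype.card G ≠ 0 := Fintype.card_ne_zero
    have IHsub : ∀ (a' : ℕ), ∀ y : G, y ∉ Subgroup.center G →
        p ^ min a' ((Fintype.card (Subgroup.centralizer ({y} : Set G))).factorization p) ∣
          #(univ.filter fun u : Subgroup.centralizer ({y} : Set G) => u ^ p ^ a' = 1) := by
      intro a' y hy
      have hne : Subgroup.centralizer ({y} : Set G) ≠ ⊤ := by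
        intro htop
        apply hy
        rw [Subgroup.mem_center_iff]
        intro g
        have hg : g ∈ Subgroup.centralizer ({y} : Set G) := htop ▸ Subgroup.mem_top g
        exact (Subgroup.mem_centralizer_iff.mp hg y (Set.mem_singleton y)).symm
      obtain ⟨x, hx⟩ : ∃ x : G, x ∉ Subgroup.centralizer ({y} : Set G) := by
        by_contra hall
        push_neg at hall
        exact hne ((Subgroup.eq_top_iff' _).mpr hall)
      have hlt : Fintype.card (Subgroup.centralizer ({y} : Set G)) < N := by
        rw [← hN]
        refine Fintype.card_lt_of_injective_of_notMem
          (fun u => (u : G)) Subtype.val_injective (b := x) ?_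
        rintro ⟨⟨u, hu⟩, rfl⟩
        exact hx hu
      have hp1 : ¬ p ∣ (1 : ℕ) := fun h => hp.ne_one (Nat.dvd_one.mp h)
      have := IH _ hlt (Subgroup.centralizer ({y} : Set G)) rfl p a' 1 hp hp1
      simpa using this
    set v := (Fintype.card G).factorization p with hv
    set e := min a v with he
    have hee : min e v = e := by omega
    have hev : e ≤ v := by omega
    -- Stage 1 : p^e divides the count of p^e-th roots of 1
    set m₀ := ordCompl[p] (Fintype.card G) with hm₀
    have hm₀p : ¬ p ∣ m₀ := Nat.not_dvd_ordCompl hp hcard0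
    obtain ⟨z₁, K₁, hz₁, hK₁, heq₁⟩ := split_sum p e m₀ hp hm₀p (IHsub e)
    rw [hee] at hK₁
    have htop : p ^ e ∣ #(univ.filter fun t : G => t ^ (p ^ e * m₀) = 1) := by
      refine count_top p hp e ?_
      exact (pow_dvd_pow p hev).trans (Nat.ordProj_dvd _ p)
    rw [heq₁] at htop
    have hzA : p ^ e ∣ z₁ * #(univ.filter fun u : G => u ^ p ^ e = 1) := by
      have : z₁ * #(univ.filter fun u : G => u ^ p ^ e = 1)
          = (z₁ * #(univ.filter fun u : G => u ^ p ^ e = 1) + K₁) - K₁ := by omega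
      rw [this]
      exact Nat.dvd_sub htop hK₁
    have hA : p ^ e ∣ #(univ.filter fun u : G => u ^ p ^ e = 1) := by
      exact Nat.Coprime.dvd_of_dvd_mul_left
        ((hp.coprime_iff_not_dvd.mpr hz₁).pow_left e) hzA
    -- Stage 2 : conclude for general m
    obtain ⟨z₂, K₂, hz₂, hK₂, heq₂⟩ := split_sum p e m hp hm (IHsub e)
    rw [hee] at hK₂
    have hfin : p ^ e ∣ #(univ.filter fun t : G => t ^ (p ^ e * m) = 1) := by
      rw [heq₂]
      exact dvd_add (hA.mul_left z₂) hK₂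
    rw [count_eq_min p hp a m hm]
    exact hfin

end FrobeniusAux

/-- If `i` divides the order of a finite group `G`, then `i` divides the sum over
all divisors `j` of `i` of the number of elements of order exactly `j`. -/
theorem dvd_sum_card_orderOf (G : Type*) [Group G] [Fintype G] (i : ℕ) (hi : 0 < i)
    (hdvd : i ∣ Fintype.card G) :
    i ∣ ∑ j ∈ Nat.divisors i, Nat.card {g : G // orderOf g = j} := by
  classical
  have hi0 : i ≠ 0 := hi.ne'
  have hcard0 : Fintype.card G ≠ 0 := Fintype.card_ne_zero
  have hsum : #(Finset.univ.filter fun t : G => t ^ i = 1)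
      = ∑ j ∈ Nat.divisors i, #((Finset.univ.filter fun t : G => t ^ i = 1).filter
          fun t => orderOf t = j) := by
    refine Finset.card_eq_sum_card_fiberwise fun t ht => ?_
    rw [Finset.mem_coe, Nat.mem_divisors]
    exact ⟨orderOf_dvd_of_pow_eq_one (by simpa using ht), hi0⟩
  have hsum2 : ∀ j ∈ Nat.divisors i,
      #((Finset.univ.filter fun t : G => t ^ i = 1).filter fun t => orderOf t = j)
        = Nat.card {g : G // orderOf g = j} := by
    intro j hj
    rw [Nat.card_eq_fintype_card, Fintype.card_subtype]
    congr 1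
    ext t
    simp only [Finset.mem_filter, Finset.mem_univ, true_and]
    constructor
    · exact fun h => h.2
    · intro h
      refine ⟨?_, h⟩
      have hdj : orderOf t ∣ i := h ▸ (Nat.mem_divisors.mp hj).1
      exact orderOf_dvd_iff_pow_eq_one.mp hdj
  have hmain_eq : ∑ j ∈ Nat.divisors i, Nat.card {g : G // orderOf g = j}
      = #(Finset.univ.filter fun t : G => t ^ i = 1) := by
    rw [hsum]
    exact Finset.sum_congr rfl fun j hj => (hsum2 j hj).symm
  rw [hmain_eq]
  have hpos : 0 < #(Finset.univ.filter fun t : G => t ^ i = 1) :=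
    Finset.card_pos.mpr ⟨1, Finset.mem_filter.mpr ⟨Finset.mem_univ _, one_pow i⟩⟩
  rw [← Nat.factorization_le_iff_dvd hi0 hpos.ne', Finsupp.le_def]
  intro p
  by_cases hp : p.Prime
  · have hfac : p ^ i.factorization p * ordCompl[p] i = i :=
      Nat.ordProj_mul_ordCompl_eq_self i p
    have hmain := FrobeniusAux.key (Fintype.card G) G rfl p (i.factorization p)
      (ordCompl[p] i) hp (Nat.not_dvd_ordCompl hp hi0)
    rw [hfac] at hmain
    have hle : i.factorization p ≤ (Fintype.card G).factorization p :=
      ((Nat.factorization_le_iff_dvd hi0 hcard0).mpr hdvd) p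
    rw [min_eq_left hle] at hmain
    exact (Nat.Prime.pow_dvd_iff_le_factorization hp hpos.ne').mp hmain
  · simp [Nat.factorization_eq_zero_of_not_prime i hp]
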